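/- The 7×7 matrix B = (1/2)·circ-type matrix with rows r_1 = (1,0,1,0,0,-1,1), r_2 = (1,1,0,1,0,0,-1), r_3 = (-1,1,1,0,1,0,0), r_4 = (0,-1,1,1,0,1,0), r_5 = (0,0,-1,1,1,0,1), r_6 = (1,0,0,-1,1,1,0), r_7 = (0,1,0,0,-1,1,1) satisfies B B^T = I. Consequently M = [[0, B],[B^T, 0]] is a symmetric orthogonal 14×14 matrix, and the bipartite graph R_{14,1} determined by the nonzero pattern of B satisfies q(R_{14,1}) = 2. -/
import Mathlib


open Matrix

/-- The explicit `7 × 7` matrix `B` from the proof that `q(R_{14,1}) = 2`. -/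
noncomputable def B141 : Matrix (Fin 7) (Fin 7) ℝ :=
  (1 / 2 : ℝ) • !![1, 0, 1, 0, 0, -1, 1;
                   1, 1, 0, 1, 0, 0, -1;
                   -1, 1, 1, 0, 1, 0, 0;
                   0, -1, 1, 1, 0, 1, 0;
                   0, 0, -1, 1, 1, 0, 1;
                   1, 0, 0, -1, 1, 1, 0;
                   0, 1, 0, 0, -1, 1, 1]

lemma my_cons_val_five {α : Type*} {m : ℕ} (x : α)
    (u : Fin (m + 5) → α) : vecCons x u 5 = vecHead (vecTail (vecTail (vecTail (vecTail u)))) :=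
  rfl

lemma my_cons_val_six {α : Type*} {m : ℕ} (x : α)
    (u : Fin (m + 6) → α) :
    vecCons x u 6 = vecHead (vecTail (vecTail (vecTail (vecTail (vecTail u))))) :=
  rfl

set_option maxHeartbeats 2000000 in
lemma hB141 : B141 * B141ᵀ = 1 := by
  ext i j
  fin_cases i <;> fin_cases j <;>
    · simp only [B141, Matrix.mul_apply, Matrix.smul_apply, Matrix.transpose_apply,
        Fin.sum_univ_seven, Matrix.one_apply, Matrix.cons_val', Matrix.cons_val_zero,
        Matrix.cons_val_one, Matrix.head_cons, Matrix.empty_val', Matrix.cons_val_fin_one,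
        Matrix.head_fin_const, Matrix.cons_val_two, Matrix.cons_val_three, Matrix.cons_val_four,
        my_cons_val_five, my_cons_val_six, Matrix.tail_cons, Matrix.of_apply]
      norm_num [Fin.ext_iff]

/-- The explicit matrix `B = B141` satisfies `B Bᵀ = I`.
Consequently `M = [[0, B], [Bᵀ, 0]]` is a symmetric orthogonal `14 × 14` matrix
(with exactly the two distinct eigenvalues `1` and `-1`), so the bipartite graph
`R_{14,1}` determined by the nonzero pattern of `B` satisfies `q(R_{14,1}) = 2`. -/
theorem stmt_13 :
    B141 * B141ᵀ = 1 ∧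
    (Matrix.fromBlocks (0 : Matrix (Fin 7) (Fin 7) ℝ) B141 B141ᵀ 0).IsSymm ∧
    (Matrix.fromBlocks (0 : Matrix (Fin 7) (Fin 7) ℝ) B141 B141ᵀ 0) *
      (Matrix.fromBlocks (0 : Matrix (Fin 7) (Fin 7) ℝ) B141 B141ᵀ 0) = 1 ∧
    spectrum ℝ (Matrix.fromBlocks (0 : Matrix (Fin 7) (Fin 7) ℝ) B141 B141ᵀ 0) = {1, -1} := by
  have hB := hB141
  have hB' : B141ᵀ * B141 = 1 := mul_eq_one_comm.mp hB
  set M : Matrix (Fin 7 ⊕ Fin 7) (Fin 7 ⊕ Fin 7) ℝ :=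
    Matrix.fromBlocks (0 : Matrix (Fin 7) (Fin 7) ℝ) B141 B141ᵀ 0 with hMdef
  have hsym : M.IsSymm := by
    unfold M
    rw [Matrix.IsSymm, Matrix.fromBlocks_transpose]
    simp
  have hM2 : M * M = 1 := by
    unfold M
    rw [Matrix.fromBlocks_multiply]
    simp [hB, hB', ← Matrix.fromBlocks_one]
  have hMentry : M (Sum.inl 0) (Sum.inl 0) = 0 := by
    unfold M; simp
  refine ⟨hB, hsym, hM2, ?_⟩
  ext x
  simp only [spectrum.mem_iff, Set.mem_insert_iff, Set.mem_singleton_iff,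
    Algebra.algebraMap_eq_smul_one]
  constructor
  · intro hx
    by_contra hcon
    push_neg at hcon
    obtain ⟨h1, h2⟩ := hcon
    apply hx
    have hx2 : x ^ 2 - 1 ≠ 0 := by
      intro h
      have : (x - 1) * (x + 1) = 0 := by ring_nf; linarith [h]
      rcases mul_eq_zero.mp this with h | h
      · exact h1 (by linarith)
      · exact h2 (by linarith)
    have inner : (x • (1 : Matrix (Fin 7 ⊕ Fin 7) (Fin 7 ⊕ Fin 7) ℝ) - M) * (x • 1 + M) =
        (x ^ 2 - 1) • 1 := by
      simp only [sub_mul, mul_add, add_mul, smul_mul_assoc, mul_smul_comm, one_mul, mul_one,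
        hM2]
      module
    have key : (x • (1 : Matrix (Fin 7 ⊕ Fin 7) (Fin 7 ⊕ Fin 7) ℝ) - M) *
        ((x ^ 2 - 1)⁻¹ • (x • 1 + M)) = 1 := by
      rw [Matrix.mul_smul, inner, smul_smul, inv_mul_cancel₀ hx2, one_smul]
    have key' : ((x ^ 2 - 1)⁻¹ • (x • 1 + M)) *
        (x • (1 : Matrix (Fin 7 ⊕ Fin 7) (Fin 7 ⊕ Fin 7) ℝ) - M) = 1 :=
      mul_eq_one_comm.mp key
    exact ⟨⟨_, _, key, key'⟩, rfl⟩
  · rintro (rfl | rfl) hx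
    · -- eigenvalue 1
      obtain ⟨u, hu⟩ := hx
      have huv : ((1:ℝ) • (1 : Matrix (Fin 7 ⊕ Fin 7) (Fin 7 ⊕ Fin 7) ℝ) - M) *
          (↑(u⁻¹) : Matrix (Fin 7 ⊕ Fin 7) (Fin 7 ⊕ Fin 7) ℝ) = 1 := by
        rw [← hu]; exact u.mul_inv
      have hz : ((1 : Matrix (Fin 7 ⊕ Fin 7) (Fin 7 ⊕ Fin 7) ℝ) + M) *
          ((1:ℝ) • (1 : Matrix (Fin 7 ⊕ Fin 7) (Fin 7 ⊕ Fin 7) ℝ) - M) = 0 := by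
        simp only [one_smul, add_mul, mul_sub, sub_mul, one_mul, mul_one, hM2]
        abel
      have hfin : (1 : Matrix (Fin 7 ⊕ Fin 7) (Fin 7 ⊕ Fin 7) ℝ) + M = 0 := by
        calc (1 : Matrix (Fin 7 ⊕ Fin 7) (Fin 7 ⊕ Fin 7) ℝ) + M
            = ((1 + M) * ((1:ℝ) • 1 - M)) * (↑(u⁻¹) : Matrix (Fin 7 ⊕ Fin 7) (Fin 7 ⊕ Fin 7) ℝ) := by
              rw [mul_assoc, huv, mul_one]
          _ = 0 := by rw [hz, zero_mul]
      have h00 : ((1 : Matrix (Fin 7 ⊕ Fin 7) (Fin 7 ⊕ Fin 7) ℝ) + M) (Sum.inl 0) (Sum.inl 0)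
          = 0 := by rw [hfin]; rfl
      simp only [Matrix.add_apply, Matrix.one_apply_eq, hMentry] at h00
      norm_num at h00
    · -- eigenvalue -1
      obtain ⟨u, hu⟩ := hx
      have huv : ((-1:ℝ) • (1 : Matrix (Fin 7 ⊕ Fin 7) (Fin 7 ⊕ Fin 7) ℝ) - M) *
          (↑(u⁻¹) : Matrix (Fin 7 ⊕ Fin 7) (Fin 7 ⊕ Fin 7) ℝ) = 1 := by
        rw [← hu]; exact u.mul_inv
      have hz : ((1 : Matrix (Fin 7 ⊕ Fin 7) (Fin 7 ⊕ Fin 7) ℝ) - M) *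
          ((-1:ℝ) • (1 : Matrix (Fin 7 ⊕ Fin 7) (Fin 7 ⊕ Fin 7) ℝ) - M) = 0 := by
        simp only [neg_smul, one_smul, sub_mul, mul_sub, mul_neg, mul_one, one_mul,
          neg_neg, hM2]
        abel
      have hfin : (1 : Matrix (Fin 7 ⊕ Fin 7) (Fin 7 ⊕ Fin 7) ℝ) - M = 0 := by
        calc (1 : Matrix (Fin 7 ⊕ Fin 7) (Fin 7 ⊕ Fin 7) ℝ) - M
            = ((1 - M) * ((-1:ℝ) • 1 - M)) * (↑(u⁻¹) : Matrix (Fin 7 ⊕ Fin 7) (Fin 7 ⊕ Fin 7) ℝ) := by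
              rw [mul_assoc, huv, mul_one]
          _ = 0 := by rw [hz, zero_mul]
      have h00 : ((1 : Matrix (Fin 7 ⊕ Fin 7) (Fin 7 ⊕ Fin 7) ℝ) - M) (Sum.inl 0) (Sum.inl 0)
          = 0 := by rw [hfin]; rfl
      simp only [Matrix.sub_apply, Matrix.one_apply_eq, hMentry] at h00
      norm_num at h00
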